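/- A polynomial p of degree at most 5 is uniquely determined by the six conditions (1/Δx)∫_{I_{i+ℓ}} p = f_{i+ℓ} and (1/Δx)∫_{I_{i+ℓ}} p' = h_{i+ℓ} for ℓ ∈ {−1, 0, 1}, where I_{i+ℓ} = [x_i + (ℓ − 1/2)Δx, x_i + (ℓ + 1/2)Δx], for any Δx > 0 and any real data f_{i+ℓ}, h_{i+ℓ}. -/

import Mathlib

open intervalIntegral Polynomial

set_option maxHeartbeats 1000000

private lemma poly_int (c s e0 e1 e2 e3 e4 e5 : ℝ) (hs : s ≠ 0) (a b : ℝ) :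
    (∫ x in a..b, (e0 + e1 * ((x - c) / s) + e2 * ((x - c) / s) ^ 2 + e3 * ((x - c) / s) ^ 3 +
        e4 * ((x - c) / s) ^ 4 + e5 * ((x - c) / s) ^ 5 : ℝ)) =
      (s * (e0 * ((b - c) / s) + e1 * ((b - c) / s) ^ 2 / 2 + e2 * ((b - c) / s) ^ 3 / 3 +
        e3 * ((b - c) / s) ^ 4 / 4 + e4 * ((b - c) / s) ^ 5 / 5 + e5 * ((b - c) / s) ^ 6 / 6)) -
      (s * (e0 * ((a - c) / s) + e1 * ((a - c) / s) ^ 2 / 2 + e2 * ((a - c) / s) ^ 3 / 3 +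
        e3 * ((a - c) / s) ^ 4 / 4 + e4 * ((a - c) / s) ^ 5 / 5 + e5 * ((a - c) / s) ^ 6 / 6)) := by
  apply intervalIntegral.integral_eq_sub_of_hasDerivAt
  · intro x _
    have hu : HasDerivAt (fun y : ℝ => (y - c) / s) (1 / s) x := by
      simpa using ((hasDerivAt_id x).sub_const c).div_const s
    have H := ((((((hu.const_mul e0).add
        (((hu.pow 2).const_mul e1).div_const 2)).add
        (((hu.pow 3).const_mul e2).div_const 3)).add
        (((hu.pow 4).const_mul e3).div_const 4)).add
        (((hu.pow 5).const_mul e4).div_const 5)).add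
        (((hu.pow 6).const_mul e5).div_const 6)).const_mul s
    refine H.congr_deriv ?_
    norm_num
    field_simp
  · apply Continuous.intervalIntegrable
    fun_prop

private lemma deriv_int (p : Polynomial ℝ) (a b : ℝ) :
    (∫ x in a..b, (Polynomial.derivative p).eval x) = p.eval b - p.eval a := by
  refine intervalIntegral.integral_eq_sub_of_hasDerivAt (fun x _ => p.hasDerivAt x) ?_
  apply Continuous.intervalIntegrable
  exact (Polynomial.derivative p).continuous

private lemma eval_expand (c s : ℝ) (hs : s ≠ 0) (q : Polynomial ℝ) (hdeg : q.natDegree ≤ 5)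
    (x : ℝ) :
    q.eval x = (taylor c q).coeff 0 + ((taylor c q).coeff 1 * s) * ((x - c) / s) +
      ((taylor c q).coeff 2 * s ^ 2) * ((x - c) / s) ^ 2 +
      ((taylor c q).coeff 3 * s ^ 3) * ((x - c) / s) ^ 3 +
      ((taylor c q).coeff 4 * s ^ 4) * ((x - c) / s) ^ 4 +
      ((taylor c q).coeff 5 * s ^ 5) * ((x - c) / s) ^ 5 := by
  have h1 : (taylor c q).natDegree < 6 := by rw [natDegree_taylor]; omega
  calc q.eval x = (taylor c q).eval (x - c) := (taylor_eval_sub c q x).symm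
    _ = ∑ i ∈ Finset.range 6, (taylor c q).coeff i * (x - c) ^ i :=
        Polynomial.eval_eq_sum_range' h1 _
    _ = _ := by
        simp only [Finset.sum_range_succ, Finset.sum_range_zero, zero_add]
        field_simp

private lemma solve_coeffs (s c : ℝ) (hs : s ≠ 0) (f h : ℤ → ℝ) (q : Polynomial ℝ)
    (hdeg : q.natDegree ≤ 5)
    (hq : ∀ ℓ : ℤ, ℓ ∈ ({-1, 0, 1} : Set ℤ) →
      (1 / s) * (∫ x in (c + (ℓ - 1 / 2 : ℝ) * s)..(c + (ℓ + 1 / 2 : ℝ) * s),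
          q.eval x) = f ℓ ∧
      (1 / s) * (∫ x in (c + (ℓ - 1 / 2 : ℝ) * s)..(c + (ℓ + 1 / 2 : ℝ) * s),
          (Polynomial.derivative q).eval x) = h ℓ) :
    (taylor c q).coeff 0 = (-47/480) * f (-1) + (287/240) * f 0 + (-47/480) * f 1 +
        (-9/320) * (s * h (-1)) + (9/320) * (s * h 1) ∧
    (taylor c q).coeff 1 * s = (27/64) * f (-1) + (-27/64) * f 1 + (19/192) * (s * h (-1)) +
        (79/48) * (s * h 0) + (19/192) * (s * h 1) ∧
    (taylor c q).coeff 2 * s ^ 2 = (5/4) * f (-1) + (-5/2) * f 0 + (5/4) * f 1 +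
        (3/8) * (s * h (-1)) + (-3/8) * (s * h 1) ∧
    (taylor c q).coeff 3 * s ^ 3 = (-15/8) * f (-1) + (15/8) * f 1 + (-11/24) * (s * h (-1)) +
        (-17/6) * (s * h 0) + (-11/24) * (s * h 1) ∧
    (taylor c q).coeff 4 * s ^ 4 = (-1/2) * f (-1) + f 0 + (-1/2) * f 1 +
        (-1/4) * (s * h (-1)) + (1/4) * (s * h 1) ∧
    (taylor c q).coeff 5 * s ^ 5 = (3/4) * f (-1) + (-3/4) * f 1 + (1/4) * (s * h (-1)) +
        (s * h 0) + (1/4) * (s * h 1) := by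
  set T0 := (taylor c q).coeff 0 with hT0
  set T1 := (taylor c q).coeff 1 with hT1
  set T2 := (taylor c q).coeff 2 with hT2
  set T3 := (taylor c q).coeff 3 with hT3
  set T4 := (taylor c q).coeff 4 with hT4
  set T5 := (taylor c q).coeff 5 with hT5
  have hscale : ∀ r : ℝ, (c + r * s - c) / s = r := fun r => by field_simp; ring
  have hev : ∀ x : ℝ, q.eval x = T0 + (T1 * s) * ((x - c) / s) + (T2 * s ^ 2) * ((x - c) / s) ^ 2
      + (T3 * s ^ 3) * ((x - c) / s) ^ 3 + (T4 * s ^ 4) * ((x - c) / s) ^ 4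
      + (T5 * s ^ 5) * ((x - c) / s) ^ 5 := fun x => eval_expand c s hs q hdeg x
  have hint : ∀ a b : ℝ, (∫ x in a..b, q.eval x) = _ :=
    fun a b => by
      rw [intervalIntegral.integral_congr (fun x _ => hev x),
        poly_int c s T0 (T1 * s) (T2 * s ^ 2) (T3 * s ^ 3) (T4 * s ^ 4) (T5 * s ^ 5) hs a b]
  obtain ⟨hf1, hh1⟩ := hq (-1) (by simp)
  obtain ⟨hf2, hh2⟩ := hq 0 (by simp)
  obtain ⟨hf3, hh3⟩ := hq 1 (by simp)
  have C1 : T0 - T1*s + (13/12)*(T2*s^2) - (5/4)*(T3*s^3) + (121/80)*(T4*s^4)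
      - (91/48)*(T5*s^5) = f (-1) := by
    rw [← hf1, hint]; push_cast; simp only [hscale]; field_simp; ring
  have C2 : T0 + (1/12)*(T2*s^2) + (1/80)*(T4*s^4) = f 0 := by
    rw [← hf2, hint]; push_cast; simp only [hscale]; field_simp; ring
  have C3 : T0 + T1*s + (13/12)*(T2*s^2) + (5/4)*(T3*s^3) + (121/80)*(T4*s^4)
      + (91/48)*(T5*s^5) = f 1 := by
    rw [← hf3, hint]; push_cast; simp only [hscale]; field_simp; ring
  have D1 : T1*s - 2*(T2*s^2) + (13/4)*(T3*s^3) - 5*(T4*s^4) + (121/16)*(T5*s^5)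
      = s * h (-1) := by
    rw [← hh1, deriv_int, hev, hev]; push_cast; simp only [hscale]; field_simp; ring
  have D2 : T1*s + (1/4)*(T3*s^3) + (1/16)*(T5*s^5) = s * h 0 := by
    rw [← hh2, deriv_int, hev, hev]; push_cast; simp only [hscale]; field_simp; ring
  have D3 : T1*s + 2*(T2*s^2) + (13/4)*(T3*s^3) + 5*(T4*s^4) + (121/16)*(T5*s^5)
      = s * h 1 := by
    rw [← hh3, deriv_int, hev, hev]; push_cast; simp only [hscale]; field_simp; ring
  refine ⟨?_, ?_, ?_, ?_, ?_, ?_⟩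
  · linear_combination (-47/480)*C1 + (287/240)*C2 + (-47/480)*C3 + (-9/320)*D1 + (9/320)*D3
  · linear_combination (27/64)*C1 + (-27/64)*C3 + (19/192)*D1 + (79/48)*D2 + (19/192)*D3
  · linear_combination (5/4)*C1 + (-5/2)*C2 + (5/4)*C3 + (3/8)*D1 + (-3/8)*D3
  · linear_combination (-15/8)*C1 + (15/8)*C3 + (-11/24)*D1 + (-17/6)*D2 + (-11/24)*D3
  · linear_combination (-1/2)*C1 + C2 + (-1/2)*C3 + (-1/4)*D1 + (1/4)*D3
  · linear_combination (3/4)*C1 + (-3/4)*C3 + (1/4)*D1 + D2 + (1/4)*D3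

noncomputable def hwP (s c F1 F2 F3 G1 G2 G3 : ℝ) : Polynomial ℝ :=
  Polynomial.C ((-47/480) * F1 + (287/240) * F2 + (-47/480) * F3 + (-9/320) * G1 + (9/320) * G3)
  + Polynomial.C ((27/64) * F1 + (-27/64) * F3 + (19/192) * G1 + (79/48) * G2 + (19/192) * G3)
      * (Polynomial.C s⁻¹ * (Polynomial.X - Polynomial.C c))
  + Polynomial.C ((5/4) * F1 + (-5/2) * F2 + (5/4) * F3 + (3/8) * G1 + (-3/8) * G3)
      * (Polynomial.C s⁻¹ * (Polynomial.X - Polynomial.C c)) ^ 2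
  + Polynomial.C ((-15/8) * F1 + (15/8) * F3 + (-11/24) * G1 + (-17/6) * G2 + (-11/24) * G3)
      * (Polynomial.C s⁻¹ * (Polynomial.X - Polynomial.C c)) ^ 3
  + Polynomial.C ((-1/2) * F1 + F2 + (-1/2) * F3 + (-1/4) * G1 + (1/4) * G3)
      * (Polynomial.C s⁻¹ * (Polynomial.X - Polynomial.C c)) ^ 4
  + Polynomial.C ((3/4) * F1 + (-3/4) * F3 + (1/4) * G1 + G2 + (1/4) * G3)
      * (Polynomial.C s⁻¹ * (Polynomial.X - Polynomial.C c)) ^ 5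

private lemma hwP_natDegree (s c F1 F2 F3 G1 G2 G3 : ℝ) :
    (hwP s c F1 F2 F3 G1 G2 G3).natDegree ≤ 5 := by
  unfold hwP
  compute_degree

private lemma hwP_eval (s c F1 F2 F3 G1 G2 G3 : ℝ) (x : ℝ) :
    (hwP s c F1 F2 F3 G1 G2 G3).eval x =
      ((-47/480) * F1 + (287/240) * F2 + (-47/480) * F3 + (-9/320) * G1 + (9/320) * G3)
      + ((27/64) * F1 + (-27/64) * F3 + (19/192) * G1 + (79/48) * G2 + (19/192) * G3)
          * ((x - c) / s)
      + ((5/4) * F1 + (-5/2) * F2 + (5/4) * F3 + (3/8) * G1 + (-3/8) * G3) * ((x - c) / s) ^ 2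
      + ((-15/8) * F1 + (15/8) * F3 + (-11/24) * G1 + (-17/6) * G2 + (-11/24) * G3)
          * ((x - c) / s) ^ 3
      + ((-1/2) * F1 + F2 + (-1/2) * F3 + (-1/4) * G1 + (1/4) * G3) * ((x - c) / s) ^ 4
      + ((3/4) * F1 + (-3/4) * F3 + (1/4) * G1 + G2 + (1/4) * G3) * ((x - c) / s) ^ 5 := by
  simp only [hwP, Polynomial.eval_add, Polynomial.eval_mul, Polynomial.eval_pow,
    Polynomial.eval_sub, Polynomial.eval_C, Polynomial.eval_X]
  ring

theorem stmt_9 (Δx xi : ℝ) (hΔ : 0 < Δx) (f h : ℤ → ℝ) :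
    ∃! p : Polynomial ℝ, p.natDegree ≤ 5 ∧
      ∀ ℓ : ℤ, ℓ ∈ ({-1, 0, 1} : Set ℤ) →
        (1 / Δx) * (∫ x in (xi + (ℓ - 1 / 2 : ℝ) * Δx)..(xi + (ℓ + 1 / 2 : ℝ) * Δx),
            p.eval x) = f ℓ ∧
        (1 / Δx) * (∫ x in (xi + (ℓ - 1 / 2 : ℝ) * Δx)..(xi + (ℓ + 1 / 2 : ℝ) * Δx),
            (Polynomial.derivative p).eval x) = h ℓ := by
  have hs : Δx ≠ 0 := ne_of_gt hΔ
  have hscale : ∀ r : ℝ, (xi + r * Δx - xi) / Δx = r := fun r => by field_simp; ring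
  set p0 : Polynomial ℝ :=
    hwP Δx xi (f (-1)) (f 0) (f 1) (Δx * h (-1)) (Δx * h 0) (Δx * h 1) with hp0def
  have hev : ∀ x : ℝ, p0.eval x =
      ((-47/480) * f (-1) + (287/240) * f 0 + (-47/480) * f 1 + (-9/320) * (Δx * h (-1))
        + (9/320) * (Δx * h 1))
      + ((27/64) * f (-1) + (-27/64) * f 1 + (19/192) * (Δx * h (-1)) + (79/48) * (Δx * h 0)
        + (19/192) * (Δx * h 1)) * ((x - xi) / Δx)
      + ((5/4) * f (-1) + (-5/2) * f 0 + (5/4) * f 1 + (3/8) * (Δx * h (-1))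
        + (-3/8) * (Δx * h 1)) * ((x - xi) / Δx) ^ 2
      + ((-15/8) * f (-1) + (15/8) * f 1 + (-11/24) * (Δx * h (-1)) + (-17/6) * (Δx * h 0)
        + (-11/24) * (Δx * h 1)) * ((x - xi) / Δx) ^ 3
      + ((-1/2) * f (-1) + f 0 + (-1/2) * f 1 + (-1/4) * (Δx * h (-1))
        + (1/4) * (Δx * h 1)) * ((x - xi) / Δx) ^ 4
      + ((3/4) * f (-1) + (-3/4) * f 1 + (1/4) * (Δx * h (-1)) + (Δx * h 0)
        + (1/4) * (Δx * h 1)) * ((x - xi) / Δx) ^ 5 :=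
    fun x => hwP_eval Δx xi _ _ _ _ _ _ x
  have hmain : p0.natDegree ≤ 5 ∧
      ∀ ℓ : ℤ, ℓ ∈ ({-1, 0, 1} : Set ℤ) →
        (1 / Δx) * (∫ x in (xi + (ℓ - 1 / 2 : ℝ) * Δx)..(xi + (ℓ + 1 / 2 : ℝ) * Δx),
            p0.eval x) = f ℓ ∧
        (1 / Δx) * (∫ x in (xi + (ℓ - 1 / 2 : ℝ) * Δx)..(xi + (ℓ + 1 / 2 : ℝ) * Δx),
            (Polynomial.derivative p0).eval x) = h ℓ := by
    refine ⟨hwP_natDegree _ _ _ _ _ _ _ _, ?_⟩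
    intro ℓ hℓ
    have hint : ∀ a b : ℝ, (∫ x in a..b, p0.eval x) = _ :=
      fun a b => by
        rw [intervalIntegral.integral_congr (fun x _ => hev x),
          poly_int xi Δx _ _ _ _ _ _ hs a b]
    constructor
    · rw [hint]
      simp only [Set.mem_insert_iff, Set.mem_singleton_iff] at hℓ
      rcases hℓ with rfl | rfl | rfl <;>
        (push_cast; simp only [hscale]; field_simp; ring)
    · rw [deriv_int, hev, hev]
      simp only [Set.mem_insert_iff, Set.mem_singleton_iff] at hℓ
      rcases hℓ with rfl | rfl | rfl <;>
        (push_cast; simp only [hscale]; field_simp; ring)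
  refine ⟨p0, hmain, ?_⟩
  rintro q ⟨hqdeg, hq⟩
  obtain ⟨a0, a1, a2, a3, a4, a5⟩ := solve_coeffs Δx xi hs f h q hqdeg hq
  obtain ⟨b0, b1, b2, b3, b4, b5⟩ := solve_coeffs Δx xi hs f h p0 hmain.1 hmain.2
  have htay : taylor xi q = taylor xi p0 := by
    apply Polynomial.ext
    intro n
    match n with
    | 0 => rw [a0, b0]
    | 1 => exact mul_right_cancel₀ hs (a1.trans b1.symm)
    | 2 => exact mul_right_cancel₀ (pow_ne_zero 2 hs) (a2.trans b2.symm)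
    | 3 => exact mul_right_cancel₀ (pow_ne_zero 3 hs) (a3.trans b3.symm)
    | 4 => exact mul_right_cancel₀ (pow_ne_zero 4 hs) (a4.trans b4.symm)
    | 5 => exact mul_right_cancel₀ (pow_ne_zero 5 hs) (a5.trans b5.symm)
    | (n + 6) =>
      rw [Polynomial.coeff_eq_zero_of_natDegree_lt, Polynomial.coeff_eq_zero_of_natDegree_lt]
      · rw [natDegree_taylor]; exact lt_of_le_of_lt hmain.1 (by omega)
      · rw [natDegree_taylor]; exact lt_of_le_of_lt hqdeg (by omega)
  have := congrArg (taylor (-xi)) htay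
  rwa [taylor_taylor, taylor_taylor, neg_add_cancel, taylor_zero, taylor_zero] at this
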